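/- arXiv:2603.19911 — 3 statements merged into one kernel-verified Lean document; each statement's English description precedes it below -/
import Mathlib

section
/- Let P be a positive definite complex d×d matrix, let J and K be positive definite complex matrices indexed by ((Fin d) × (Fin d')) × ((Fin d) × (Fin d')), and let t ∈ ℝ. Then Tr[G_t((P^{1/2} ⊗ I) J (P^{1/2} ⊗ I), (P^{1/2} ⊗ I) K (P^{1/2} ⊗ I))] = Tr[(P ⊗ I) · G_t(J,K)] = Tr[P · Tr_B(G_t(J,K))], where I is the d'×d' identity matrix. -/
open Matrix Kronecker
open scoped ComplexOrder

noncomputable section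

/-- Apply a real function to a complex matrix via the spectral decomposition
(meaningful for Hermitian matrices; defined as `0` otherwise). -/
def matFun {n : Type*} [Fintype n] [DecidableEq n]
    (f : ℝ → ℝ) (A : Matrix n n ℂ) : Matrix n n ℂ :=
  if hA : A.IsHermitian then
    (hA.eigenvectorUnitary : Matrix n n ℂ) *
      Matrix.diagonal (fun i => (f (hA.eigenvalues i) : ℂ)) *
      (hA.eigenvectorUnitary : Matrix n n ℂ)ᴴ
  else 0

/-- Real power of a matrix (via the spectral decomposition). -/
def mpow {n : Type*} [Fintype n] [DecidableEq n] (A : Matrix n n ℂ) (t : ℝ) :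
    Matrix n n ℂ :=
  matFun (fun x => x ^ t) A

/-- Logarithm of a matrix (via the spectral decomposition). -/
def mlog {n : Type*} [Fintype n] [DecidableEq n] (A : Matrix n n ℂ) : Matrix n n ℂ :=
  matFun Real.log A

/-- The operator relative entropy `D_op(X‖Y) = X^{1/2} log(X^{1/2} Y⁻¹ X^{1/2}) X^{1/2}`. -/
def Dop {n : Type*} [Fintype n] [DecidableEq n] (X Y : Matrix n n ℂ) : Matrix n n ℂ :=
  mpow X (1/2) * mlog (mpow X (1/2) * Y⁻¹ * mpow X (1/2)) * mpow X (1/2)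

/-- The Belavkin--Staszewski relative entropy `D̂(ρ‖σ) = Re Tr[D_op(ρ‖σ)]`. -/
def BSEntropy {n : Type*} [Fintype n] [DecidableEq n] (ρ σ : Matrix n n ℂ) : ℝ :=
  (Dop ρ σ).trace.re

/-- The weighted matrix geometric mean `G_t(X,Y) = X^{1/2} (X^{-1/2} Y X^{-1/2})^t X^{1/2}`. -/
def geoMean {n : Type*} [Fintype n] [DecidableEq n] (t : ℝ) (X Y : Matrix n n ℂ) :
    Matrix n n ℂ :=
  mpow X (1/2) * mpow (mpow X (-(1/2)) * Y * mpow X (-(1/2))) t * mpow X (1/2)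

/-- Partial trace over the second (B) factor. -/
def ptraceB {R B : Type*} [Fintype B] (M : Matrix (R × B) (R × B) ℂ) : Matrix R R ℂ :=
  Matrix.of fun r r' => ∑ b, M (r, b) (r', b)

/-- Partial trace over the first (R) factor. -/
def ptraceR {R A : Type*} [Fintype R] (M : Matrix (R × A) (R × A) ℂ) : Matrix A A ℂ :=
  Matrix.of fun a a' => ∑ r, M (r, a) (r, a')

/-- The map associated to a Choi matrix `J` (indexed by `(A × B) × (A × B)`), applied to a
matrix indexed by `(R × A) × (R × A)`. -/
def choiMap {R A B : Type*} [Fintype A] (J : Matrix (A × B) (A × B) ℂ)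
    (X : Matrix (R × A) (R × A) ℂ) : Matrix (R × B) (R × B) ℂ :=
  Matrix.of fun p q => ∑ a, ∑ a', X (p.1, a) (q.1, a') * J (a, p.2) (a', q.2)


section AuxLemmas

variable {n : Type*} [Fintype n] [DecidableEq n]

lemma matFun_eq_cfc (f : ℝ → ℝ) {A : Matrix n n ℂ} (hA : A.IsHermitian) :
    matFun f A = cfc f A := by
  rw [hA.cfc_eq, matFun, dif_pos hA]
  rfl

lemma mpow_eq_cfc {A : Matrix n n ℂ} (hA : A.IsHermitian) (t : ℝ) :
    mpow A t = cfc (fun x : ℝ => x ^ t) A := matFun_eq_cfc _ hA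

lemma continuousOn_spectrum (f : ℝ → ℝ) (A : Matrix n n ℂ) :
    ContinuousOn f (spectrum ℝ A) := by
  rw [continuousOn_iff_continuous_restrict]
  fun_prop

lemma mpow_isHermitian {A : Matrix n n ℂ} (hA : A.IsHermitian) (t : ℝ) :
    (mpow A t).IsHermitian := by
  rw [mpow_eq_cfc hA]
  exact cfc_predicate _ A

lemma spectrum_pos_of_posDef {A : Matrix n n ℂ} (hA : A.PosDef) :
    ∀ x ∈ spectrum ℝ A, 0 < x := by
  rw [Matrix.IsHermitian.spectrum_real_eq_range_eigenvalues hA.isHermitian]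
  rintro x ⟨i, rfl⟩
  exact hA.eigenvalues_pos i

lemma mpow_mul_mpow {A : Matrix n n ℂ} (hA : A.PosDef) (s r : ℝ) :
    mpow A s * mpow A r = mpow A (s + r) := by
  rw [mpow_eq_cfc hA.1, mpow_eq_cfc hA.1, mpow_eq_cfc hA.1,
    ← cfc_mul _ _ A (continuousOn_spectrum _ A) (continuousOn_spectrum _ A)]
  exact cfc_congr fun x hx => (Real.rpow_add (spectrum_pos_of_posDef hA x hx) s r).symm

lemma mpow_zero {A : Matrix n n ℂ} (hA : A.IsHermitian) : mpow A 0 = 1 := by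
  rw [mpow_eq_cfc hA]
  calc cfc (fun x : ℝ => x ^ (0 : ℝ)) A = cfc (fun _ : ℝ => (1 : ℝ)) A :=
        cfc_congr fun x _ => Real.rpow_zero x
    _ = 1 := cfc_const_one ℝ A hA

lemma mpow_one {A : Matrix n n ℂ} (hA : A.IsHermitian) : mpow A 1 = A := by
  rw [mpow_eq_cfc hA]
  calc cfc (fun x : ℝ => x ^ (1 : ℝ)) A = cfc (fun x : ℝ => x) A :=
        cfc_congr fun x _ => Real.rpow_one x
    _ = A := cfc_id ℝ A hA

lemma mpow_neg_one {A : Matrix n n ℂ} (hA : A.PosDef) : mpow A (-1) = A⁻¹ := by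
  refine (Matrix.inv_eq_right_inv ?_).symm
  have h1 : A * mpow A (-1) = mpow A 1 * mpow A (-1) := by rw [mpow_one hA.1]
  rw [h1, mpow_mul_mpow hA]
  norm_num [mpow_zero hA.1]

/-- Conjugation by a unitary as a star algebra homomorphism. -/
def unitaryConjStarAlgHom (U : Matrix n n ℂ) (hU : U ∈ unitary (Matrix n n ℂ)) :
    Matrix n n ℂ →⋆ₐ[ℂ] Matrix n n ℂ where
  toFun A := U * A * star U
  map_one' := by simpa using Unitary.mul_star_self_of_mem hU
  map_mul' A B := by
    have h : star U * U = 1 := Unitary.star_mul_self_of_mem hU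
    calc U * (A * B) * star U = (U * A) * (star U * U) * (B * star U) := by
          rw [h]; noncomm_ring
      _ = U * A * star U * (U * B * star U) := by noncomm_ring
  map_zero' := by simp
  map_add' A B := by noncomm_ring
  commutes' c := by
    have h : U * star U = 1 := Unitary.mul_star_self_of_mem hU
    simp only [Algebra.algebraMap_eq_smul_one]
    rw [mul_smul_comm, mul_one, smul_mul_assoc, h]
  map_star' A := by
    simp only [Matrix.star_mul, star_star, mul_assoc]

lemma cfc_unitary_conj (f : ℝ → ℝ) {A : Matrix n n ℂ} (hA : A.IsHermitian)
    {U : Matrix n n ℂ} (hU : U ∈ unitary (Matrix n n ℂ)) :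
    cfc f (U * A * star U) = U * cfc f A * star U := by
  have hsa : IsSelfAdjoint A := hA
  have hsa' : IsSelfAdjoint (U * A * star U) := by
    rw [isSelfAdjoint_iff]
    simp only [Matrix.star_mul, star_star, hsa.star_eq, mul_assoc]
  have hcont : Continuous (unitaryConjStarAlgHom U hU) := by
    show Continuous fun A : Matrix n n ℂ => U * A * star U
    exact (continuous_const.matrix_mul continuous_id).matrix_mul continuous_const
  have := StarAlgHomClass.map_cfc (S := ℂ) (unitaryConjStarAlgHom U hU) f A
    (continuousOn_spectrum f A) hcont hsa hsa'
  exact this.symm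

lemma mpow_unitary_conj (t : ℝ) {A : Matrix n n ℂ} (hA : A.IsHermitian)
    {U : Matrix n n ℂ} (hU : U ∈ unitary (Matrix n n ℂ)) :
    mpow (U * A * star U) t = U * mpow A t * star U := by
  have hA' : (U * A * star U).IsHermitian := by
    have hsa : IsSelfAdjoint A := hA
    show IsSelfAdjoint _
    rw [isSelfAdjoint_iff]
    simp only [Matrix.star_mul, star_star, hsa.star_eq, mul_assoc]
  rw [mpow_eq_cfc hA' t, mpow_eq_cfc hA t]
  exact cfc_unitary_conj _ hA hU

lemma posDef_conj {M A : Matrix n n ℂ} (hA : A.PosDef) (hM : IsUnit M) :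
    (Mᴴ * A * M).PosDef := by
  refine Matrix.PosDef.of_dotProduct_mulVec_pos (Matrix.isHermitian_conjTranspose_mul_mul M hA.1) fun x hx => ?_
  have hMx : M *ᵥ x ≠ 0 := by
    intro h
    apply hx
    have hinj := Matrix.mulVec_injective_iff_isUnit.mpr hM
    have := hinj (by rw [h, Matrix.mulVec_zero] : M *ᵥ x = M *ᵥ 0)
    simpa using this
  have h := hA.dotProduct_mulVec_pos hMx
  have key : star x ⬝ᵥ (Mᴴ * A * M) *ᵥ x = star (M *ᵥ x) ⬝ᵥ A *ᵥ (M *ᵥ x) := by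
    rw [Matrix.star_mulVec, ← Matrix.mulVec_mulVec, ← Matrix.mulVec_mulVec,
      Matrix.dotProduct_mulVec (star x) Mᴴ, ← Matrix.star_mulVec]
  rwa [key]

/-- Congruence invariance of the weighted geometric mean. -/
lemma geoMean_conj {M J K : Matrix n n ℂ} (hM : M.IsHermitian) (hMu : IsUnit M)
    (hJ : J.PosDef) (hK : K.PosDef) (t : ℝ) :
    geoMean t (M * J * M) (M * K * M) = M * geoMean t J K * M := by
  have hMJM : (M * J * M).PosDef := by
    have := posDef_conj hJ hMu
    rwa [hM.eq] at this
  set X := M * J * M with hXdef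
  set S := mpow X (1/2) with hSdef
  set Sm := mpow X (-(1/2)) with hSmdef
  set Jh := mpow J (1/2) with hJhdef
  set Jm := mpow J (-(1/2)) with hJmdef
  have hSSm : S * Sm = 1 := by
    rw [hSdef, hSmdef, mpow_mul_mpow hMJM]
    norm_num [mpow_zero hMJM.1]
  have hSmS : Sm * S = 1 := by
    rw [hSdef, hSmdef, mpow_mul_mpow hMJM]
    norm_num [mpow_zero hMJM.1]
  have hJhJm : Jh * Jm = 1 := by
    rw [hJhdef, hJmdef, mpow_mul_mpow hJ]
    norm_num [mpow_zero hJ.1]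
  have hJmJh : Jm * Jh = 1 := by
    rw [hJhdef, hJmdef, mpow_mul_mpow hJ]
    norm_num [mpow_zero hJ.1]
  have hSmSm : Sm * Sm = X⁻¹ := by
    rw [hSmdef, mpow_mul_mpow hMJM]
    norm_num [mpow_neg_one hMJM]
  have hJmJm : Jm * Jm = J⁻¹ := by
    rw [hJmdef, mpow_mul_mpow hJ]
    norm_num [mpow_neg_one hJ]
  have hJhJh : Jh * Jh = J := by
    rw [hJhdef, mpow_mul_mpow hJ]
    norm_num [mpow_one hJ.1]
  -- star of the relevant matrices
  have hSm_herm : Sm.IsHermitian := mpow_isHermitian hMJM.1 _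
  have hJh_herm : Jh.IsHermitian := mpow_isHermitian hJ.1 _
  set U := Sm * M * Jh with hUdef
  have hstarU : star U = Jh * M * Sm := by
    show (Sm * M * Jh)ᴴ = Jh * M * Sm
    rw [Matrix.conjTranspose_mul, Matrix.conjTranspose_mul, hSm_herm.eq, hJh_herm.eq, hM.eq]
    noncomm_ring
  have hXinv : X⁻¹ = M⁻¹ * J⁻¹ * M⁻¹ := by
    rw [hXdef, Matrix.mul_inv_rev, Matrix.mul_inv_rev]
    noncomm_ring
  have hdet : IsUnit M.det := (Matrix.isUnit_iff_isUnit_det M).mp hMu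
  have hMMinv : M * M⁻¹ = 1 := Matrix.mul_nonsing_inv M hdet
  have hMinvM : M⁻¹ * M = 1 := Matrix.nonsing_inv_mul M hdet
  have hUunit : U ∈ unitary (Matrix n n ℂ) := by
    rw [Unitary.mem_iff]
    constructor
    · rw [hstarU, hUdef]
      calc Jh * M * Sm * (Sm * M * Jh) = Jh * (M * (Sm * Sm) * M) * Jh := by noncomm_ring
        _ = Jh * (M * (M⁻¹ * J⁻¹ * M⁻¹) * M) * Jh := by rw [hSmSm, hXinv]
        _ = Jh * ((M * M⁻¹) * J⁻¹ * (M⁻¹ * M)) * Jh := by noncomm_ring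
        _ = Jh * J⁻¹ * Jh := by rw [hMMinv, hMinvM]; noncomm_ring
        _ = (Jh * Jm) * (Jm * Jh) := by rw [← hJmJm]; noncomm_ring
        _ = 1 := by rw [hJhJm, hJmJh, one_mul]
    · have hSmX : Sm * X = S := by
        rw [hSmdef, hSdef]
        nth_rewrite 2 [← mpow_one hMJM.1]
        rw [mpow_mul_mpow hMJM]
        norm_num
      rw [hstarU, hUdef]
      calc Sm * M * Jh * (Jh * M * Sm) = Sm * (M * (Jh * Jh) * M) * Sm := by noncomm_ring
        _ = Sm * X * Sm := by rw [hJhJh, hXdef]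
        _ = S * Sm := by rw [hSmX]
        _ = 1 := hSSm
  have hA0 : (Jm * K * Jm).IsHermitian := by
    have hJm_herm : Jm.IsHermitian := mpow_isHermitian hJ.1 _
    show (Jm * K * Jm)ᴴ = Jm * K * Jm
    rw [Matrix.conjTranspose_mul, Matrix.conjTranspose_mul, hJm_herm.eq, hK.1.eq]
    noncomm_ring
  have hkey : Sm * (M * K * M) * Sm = U * (Jm * K * Jm) * star U := by
    rw [hstarU, hUdef]
    symm
    calc Sm * M * Jh * (Jm * K * Jm) * (Jh * M * Sm)
        = Sm * M * ((Jh * Jm) * K * (Jm * Jh)) * M * Sm := by noncomm_ring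
      _ = Sm * (M * K * M) * Sm := by rw [hJhJm, hJmJh]; noncomm_ring
  have hmain : mpow (Sm * (M * K * M) * Sm) t = U * mpow (Jm * K * Jm) t * star U := by
    rw [hkey]
    exact mpow_unitary_conj t hA0 hUunit
  have hSU : S * U = M * Jh := by
    rw [hUdef]
    calc S * (Sm * M * Jh) = (S * Sm) * (M * Jh) := by noncomm_ring
      _ = M * Jh := by rw [hSSm, one_mul]
  have hUS : star U * S = Jh * M := by
    rw [hstarU]
    calc Jh * M * Sm * S = (Jh * M) * (Sm * S) := by noncomm_ring
      _ = Jh * M := by rw [hSmS, mul_one]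
  show S * mpow (Sm * (M * K * M) * Sm) t * S = M * (Jh * mpow (Jm * K * Jm) t * Jh) * M
  rw [hmain]
  calc S * (U * mpow (Jm * K * Jm) t * star U) * S
      = (S * U) * mpow (Jm * K * Jm) t * (star U * S) := by noncomm_ring
    _ = (M * Jh) * mpow (Jm * K * Jm) t * (Jh * M) := by rw [hSU, hUS]
    _ = M * (Jh * mpow (Jm * K * Jm) t * Jh) * M := by noncomm_ring

lemma kronecker_conjTranspose {m : Type*} [Fintype m] [DecidableEq m]
    (A : Matrix n n ℂ) (B : Matrix m m ℂ) : (A ⊗ₖ B)ᴴ = Aᴴ ⊗ₖ Bᴴ := by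
  apply Matrix.ext
  intro i k
  simp [Matrix.conjTranspose_apply, Matrix.kroneckerMap_apply, star_mul', mul_comm]

lemma trace_kron_one_mul {R B : Type*} [Fintype R] [Fintype B] [DecidableEq R] [DecidableEq B]
    (P : Matrix R R ℂ) (G : Matrix (R × B) (R × B) ℂ) :
    ((P ⊗ₖ (1 : Matrix B B ℂ)) * G).trace = (P * ptraceB G).trace := by
  simp only [Matrix.trace, Matrix.diag, Matrix.mul_apply, ptraceB, Matrix.of_apply,
    Matrix.kroneckerMap_apply, Fintype.sum_prod_type, Matrix.one_apply, mul_ite, mul_one,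
    mul_zero, ite_mul, zero_mul, Finset.sum_ite_eq, Finset.sum_ite_eq', Finset.mem_univ,
    if_true, Finset.mul_sum]
  exact Finset.sum_congr rfl fun r _ => Finset.sum_comm

end AuxLemmas


/-- For positive definite `P` and positive definite bipartite `J`, `K`, and `t ∈ ℝ`,
`Tr[G_t((P^{1/2} ⊗ I) J (P^{1/2} ⊗ I), (P^{1/2} ⊗ I) K (P^{1/2} ⊗ I))]
  = Tr[(P ⊗ I) · G_t(J,K)] = Tr[P · Tr_B(G_t(J,K))]`. -/
theorem trace_geoMean_sandwich_eq {d d' : ℕ}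
    (P : Matrix (Fin d) (Fin d) ℂ) (hP : P.PosDef)
    (J K : Matrix ((Fin d) × (Fin d')) ((Fin d) × (Fin d')) ℂ)
    (hJ : J.PosDef) (hK : K.PosDef) (t : ℝ) :
    (geoMean t
        ((mpow P (1/2) ⊗ₖ (1 : Matrix (Fin d') (Fin d') ℂ)) * J *
          (mpow P (1/2) ⊗ₖ (1 : Matrix (Fin d') (Fin d') ℂ)))
        ((mpow P (1/2) ⊗ₖ (1 : Matrix (Fin d') (Fin d') ℂ)) * K *
          (mpow P (1/2) ⊗ₖ (1 : Matrix (Fin d') (Fin d') ℂ)))).trace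
      = ((P ⊗ₖ (1 : Matrix (Fin d') (Fin d') ℂ)) * geoMean t J K).trace
    ∧ ((P ⊗ₖ (1 : Matrix (Fin d') (Fin d') ℂ)) * geoMean t J K).trace
      = (P * ptraceB (geoMean t J K)).trace := by
  set M : Matrix ((Fin d) × (Fin d')) ((Fin d) × (Fin d')) ℂ :=
    mpow P (1/2) ⊗ₖ (1 : Matrix (Fin d') (Fin d') ℂ) with hMdef
  have hPh : (mpow P (1/2)).IsHermitian := mpow_isHermitian hP.1 _
  have hM : M.IsHermitian := by
    show Mᴴ = M
    rw [hMdef, kronecker_conjTranspose, hPh.eq, Matrix.conjTranspose_one]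
  have hMu : IsUnit M := by
    refine (Matrix.isUnit_iff_isUnit_det M).mpr (Matrix.isUnit_det_of_right_inverse
      (B := mpow P (-(1/2)) ⊗ₖ (1 : Matrix (Fin d') (Fin d') ℂ)) ?_)
    rw [hMdef, ← Matrix.mul_kronecker_mul, mpow_mul_mpow hP, one_mul]
    norm_num [mpow_zero hP.1, Matrix.one_kronecker_one]
  have hMM : M * M = P ⊗ₖ (1 : Matrix (Fin d') (Fin d') ℂ) := by
    rw [hMdef, ← Matrix.mul_kronecker_mul, mpow_mul_mpow hP, one_mul]
    norm_num [mpow_one hP.1]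
  refine ⟨?_, trace_kron_one_mul P _⟩
  rw [geoMean_conj hM hMu hJ hK t, Matrix.trace_mul_cycle, hMM]
end
end

section
/- Let X and Y be positive definite complex n×n matrices and let M be an invertible complex n×n matrix. Then D_op(M X Mᴴ ‖ M Y Mᴴ) = M · D_op(X‖Y) · Mᴴ. -/
open Matrix Kronecker
open scoped ComplexOrder

noncomputable section

namespace DopAux
variable {n : Type*} [Fintype n] [DecidableEq n]

lemma matFun_eq_cfc (f : ℝ → ℝ) {A : Matrix n n ℂ} (hA : A.IsHermitian) :
    matFun f A = cfc f A := by
  rw [hA.cfc_eq, matFun, dif_pos hA]; rfl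

lemma contOn (f : ℝ → ℝ) (A : Matrix n n ℂ) :
    ContinuousOn f (spectrum ℝ A) := by
  rw [continuousOn_iff_continuous_restrict]
  have : Finite (spectrum ℝ A) := A.finite_real_spectrum
  fun_prop

lemma posDef_conj {X : Matrix n n ℂ} (hX : X.PosDef) {M : Matrix n n ℂ} (hM : IsUnit M) :
    (M * X * Mᴴ).PosDef := by
  have hMH : IsUnit Mᴴ := by rw [← Matrix.star_eq_conjTranspose]; exact hM.star
  refine Matrix.PosDef.of_dotProduct_mulVec_pos ?_ fun x hx => ?_
  · show (M * X * Mᴴ)ᴴ = _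
    rw [conjTranspose_mul, conjTranspose_mul, conjTranspose_conjTranspose, hX.1.eq, mul_assoc]
  · have hx' : Mᴴ *ᵥ x ≠ 0 := by
      intro h
      apply hx
      have := congrArg (fun v => (Mᴴ)⁻¹ *ᵥ v) h
      simpa [Matrix.mulVec_mulVec,
        Matrix.nonsing_inv_mul _ ((Matrix.isUnit_iff_isUnit_det _).mp hMH)] using this
    have h2 := hX.dotProduct_mulVec_pos hx'
    convert h2 using 1
    rw [star_mulVec, Matrix.mulVec_mulVec, ← Matrix.dotProduct_mulVec, mul_assoc,
      Matrix.mulVec_mulVec, conjTranspose_conjTranspose]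

lemma spectrum_pos {X : Matrix n n ℂ} (hX : X.PosDef) : ∀ x ∈ spectrum ℝ X, 0 < x := by
  intro x hx
  rw [hX.1.spectrum_real_eq_range_eigenvalues] at hx
  obtain ⟨i, rfl⟩ := hx
  exact hX.eigenvalues_pos i

lemma matFun_posDef {f : ℝ → ℝ} {A : Matrix n n ℂ} (hA : A.PosDef)
    (hf : ∀ i, 0 < f (hA.1.eigenvalues i)) : (matFun f A).PosDef := by
  rw [matFun, dif_pos hA.1]
  have h1 : (Matrix.diagonal (fun i => ((f (hA.1.eigenvalues i) : ℝ) : ℂ))).PosDef :=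
    Matrix.PosDef.diagonal fun i => by exact_mod_cast hf i
  have hU : IsUnit (hA.1.eigenvectorUnitary : Matrix n n ℂ) :=
    (Unitary.toUnits hA.1.eigenvectorUnitary).isUnit
  exact posDef_conj h1 hU

lemma mpow_half_posDef {X : Matrix n n ℂ} (hX : X.PosDef) : (mpow X (1/2)).PosDef :=
  matFun_posDef hX fun i => Real.rpow_pos_of_pos (hX.eigenvalues_pos i) _

lemma mpow_half_mul_self {X : Matrix n n ℂ} (hX : X.PosDef) :
    mpow X (1/2) * mpow X (1/2) = X := by
  have hsa : IsSelfAdjoint X := hX.1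
  rw [mpow, matFun_eq_cfc _ hX.1, ← cfc_mul _ _ X (contOn _ X) (contOn _ X)]
  have h : cfc (fun x : ℝ => x ^ (1/2:ℝ) * x ^ (1/2:ℝ)) X = cfc (fun x : ℝ => x) X := by
    apply cfc_congr
    intro x hx
    have hx0 := spectrum_pos hX x hx
    show x ^ (1/2:ℝ) * x ^ (1/2:ℝ) = x
    rw [← Real.rpow_add hx0]
    norm_num
  rw [h, cfc_id' ℝ X]

def conjSAH (C : Matrix n n ℂ) (hC : C ∈ Matrix.unitaryGroup n ℂ) :
    Matrix n n ℂ →⋆ₐ[ℂ] Matrix n n ℂ where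
  toFun A := C * A * Cᴴ
  map_one' := by
    show C * 1 * Cᴴ = 1
    rw [mul_one, ← Matrix.star_eq_conjTranspose]
    exact Matrix.mem_unitaryGroup_iff.mp hC
  map_mul' A B := by
    have h : Cᴴ * C = 1 := by
      rw [← Matrix.star_eq_conjTranspose]; exact Matrix.mem_unitaryGroup_iff'.mp hC
    show C * (A * B) * Cᴴ = C * A * Cᴴ * (C * B * Cᴴ)
    calc C * (A * B) * Cᴴ = C * A * (Cᴴ * C) * B * Cᴴ := by rw [h]; noncomm_ring
      _ = C * A * Cᴴ * (C * B * Cᴴ) := by noncomm_ring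
  map_zero' := by show C * 0 * Cᴴ = 0; simp
  map_add' A B := by show C * (A + B) * Cᴴ = C * A * Cᴴ + C * B * Cᴴ; noncomm_ring
  commutes' c := by
    show C * algebraMap ℂ (Matrix n n ℂ) c * Cᴴ = _
    have h1 : C * Cᴴ = 1 := by
      rw [← Matrix.star_eq_conjTranspose]; exact Matrix.mem_unitaryGroup_iff.mp hC
    rw [Algebra.algebraMap_eq_smul_one, Matrix.mul_smul, mul_one, Matrix.smul_mul, h1]
  map_star' A := by
    show C * star A * Cᴴ = star (C * A * Cᴴ)
    simp [Matrix.star_eq_conjTranspose, conjTranspose_mul, mul_assoc]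

lemma continuous_conj' (C : Matrix n n ℂ) : Continuous fun A : Matrix n n ℂ => C * A * Cᴴ := by
  fun_prop

lemma cfc_unitary_conj (f : ℝ → ℝ) {K : Matrix n n ℂ} (hK : K.IsHermitian)
    {C : Matrix n n ℂ} (hC : C ∈ Matrix.unitaryGroup n ℂ) :
    cfc f (C * K * Cᴴ) = C * cfc f K * Cᴴ := by
  have hsa : IsSelfAdjoint K := hK
  have hφK : IsSelfAdjoint (conjSAH C hC K) := by
    show _root_.IsSelfAdjoint (C * K * Cᴴ)
    rw [_root_.IsSelfAdjoint, Matrix.star_eq_conjTranspose, conjTranspose_mul, conjTranspose_mul,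
      conjTranspose_conjTranspose, hK.eq, mul_assoc]
  exact (StarAlgHomClass.map_cfc (conjSAH C hC) f K (contOn f K)
    (continuous_conj' C) hsa hφK).symm

lemma mlog_unitary_conj {K : Matrix n n ℂ} (hK : K.PosDef)
    {C : Matrix n n ℂ} (hC : C ∈ Matrix.unitaryGroup n ℂ) :
    mlog (C * K * Cᴴ) = C * mlog K * Cᴴ := by
  have hCKC : (C * K * Cᴴ).PosDef :=
    posDef_conj hK (Unitary.toUnits (⟨C, hC⟩ : Matrix.unitaryGroup n ℂ)).isUnit
  rw [mlog, mlog, matFun_eq_cfc _ hCKC.1, matFun_eq_cfc _ hK.1, cfc_unitary_conj _ hK.1 hC]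

end DopAux

/-- transformer equality for the operator relative entropy:
`D_op(M X Mᴴ ‖ M Y Mᴴ) = M · D_op(X‖Y) · Mᴴ` for invertible `M`. -/
theorem Dop_conj_invertible {n : ℕ}
    (X Y : Matrix (Fin n) (Fin n) ℂ) (hX : X.PosDef) (hY : Y.PosDef)
    (M : Matrix (Fin n) (Fin n) ℂ) (hM : IsUnit M) :
    Dop (M * X * Mᴴ) (M * Y * Mᴴ) = M * Dop X Y * Mᴴ := by
  have hMH : IsUnit Mᴴ := by rw [← Matrix.star_eq_conjTranspose]; exact hM.star
  set A := M * X * Mᴴ with hAdef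
  set B := M * Y * Mᴴ with hBdef
  have hA : A.PosDef := DopAux.posDef_conj hX hM
  have hB : B.PosDef := DopAux.posDef_conj hY hM
  simp only [Dop]
  set S := mpow X (1/2) with hSdef
  set T := mpow A (1/2) with hTdef
  have hS : S.PosDef := DopAux.mpow_half_posDef hX
  have hT : T.PosDef := DopAux.mpow_half_posDef hA
  have hSS : S * S = X := DopAux.mpow_half_mul_self hX
  have hTT : T * T = A := DopAux.mpow_half_mul_self hA
  haveI : Invertible M := M.invertibleOfIsUnitDet ((Matrix.isUnit_iff_isUnit_det M).mp hM)
  haveI : Invertible Mᴴ := (Mᴴ).invertibleOfIsUnitDet ((Matrix.isUnit_iff_isUnit_det _).mp hMH)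
  haveI : Invertible S := S.invertibleOfIsUnitDet ((Matrix.isUnit_iff_isUnit_det _).mp hS.isUnit)
  haveI : Invertible T := T.invertibleOfIsUnitDet ((Matrix.isUnit_iff_isUnit_det _).mp hT.isUnit)
  set K := S * Y⁻¹ * S with hKdef
  have hK : K.PosDef := by
    have := DopAux.posDef_conj hY.inv hS.isUnit
    rwa [hS.1.eq] at this
  set C := T * (Mᴴ)⁻¹ * S⁻¹ with hCdef
  have hCH : Cᴴ = S⁻¹ * (M⁻¹ * T) := by
    rw [hCdef, conjTranspose_mul, conjTranspose_mul, Matrix.conjTranspose_nonsing_inv,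
      Matrix.conjTranspose_nonsing_inv, conjTranspose_conjTranspose, hS.1.eq, hT.1.eq]
  have hCu : C ∈ Matrix.unitaryGroup (Fin n) ℂ := by
    rw [Matrix.mem_unitaryGroup_iff', Matrix.star_eq_conjTranspose, hCH, hCdef]
    calc S⁻¹ * (M⁻¹ * T) * (T * (Mᴴ)⁻¹ * S⁻¹)
        = S⁻¹ * (M⁻¹ * (T * T) * (Mᴴ)⁻¹) * S⁻¹ := by noncomm_ring
      _ = S⁻¹ * (M⁻¹ * A * (Mᴴ)⁻¹) * S⁻¹ := by rw [hTT]
      _ = S⁻¹ * X * S⁻¹ := by rw [hAdef]; simp [Matrix.mul_assoc]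
      _ = 1 := by rw [← hSS]; simp [Matrix.mul_assoc]
  have key : T * B⁻¹ * T = C * K * Cᴴ := by
    rw [hCH, hCdef, hKdef, hBdef, Matrix.mul_inv_rev, Matrix.mul_inv_rev]
    simp [Matrix.mul_assoc]
  have hTC : T * C = M * S := by
    rw [hCdef]
    calc T * (T * (Mᴴ)⁻¹ * S⁻¹) = (T * T) * (Mᴴ)⁻¹ * S⁻¹ := by noncomm_ring
      _ = M * X * Mᴴ * (Mᴴ)⁻¹ * S⁻¹ := by rw [hTT, hAdef]
      _ = M * S := by rw [← hSS]; simp [Matrix.mul_assoc]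
  have hCT : Cᴴ * T = S * Mᴴ := by
    rw [hCH]
    calc S⁻¹ * (M⁻¹ * T) * T = S⁻¹ * (M⁻¹ * (T * T)) := by noncomm_ring
      _ = S⁻¹ * (M⁻¹ * (M * X * Mᴴ)) := by rw [hTT, hAdef]
      _ = S * Mᴴ := by rw [← hSS]; simp [Matrix.mul_assoc]
  rw [key, DopAux.mlog_unitary_conj hK hCu]
  calc T * (C * mlog K * Cᴴ) * T = (T * C) * mlog K * (Cᴴ * T) := by noncomm_ring
    _ = M * S * mlog K * (S * Mᴴ) := by rw [hTC, hCT]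
    _ = M * (S * mlog K * S) * Mᴴ := by noncomm_ring
end
end

section
/- (Transformer inequality for the operator relative entropy.) Let X and Y be positive definite complex n×n matrices and let M be a complex m×n matrix such that M Mᴴ is positive definite (i.e., M has full row rank, so that M X Mᴴ and M Y Mᴴ are positive definite). Then M · D_op(X‖Y) · Mᴴ − D_op(M X Mᴴ ‖ M Y Mᴴ) is positive semidefinite. -/
open Matrix Kronecker
open scoped ComplexOrder

noncomputable section

variable {n : ℕ}

lemma matFun_of_isHermitian (f : ℝ → ℝ) {A : Matrix (Fin n) (Fin n) ℂ} (hA : A.IsHermitian) :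
    matFun f A = (hA.eigenvectorUnitary : Matrix (Fin n) (Fin n) ℂ) *
      Matrix.diagonal (fun i => (f (hA.eigenvalues i) : ℂ)) *
      (hA.eigenvectorUnitary : Matrix (Fin n) (Fin n) ℂ)ᴴ := by
  rw [matFun, dif_pos hA]

lemma matFun_isHermitian (f : ℝ → ℝ) (A : Matrix (Fin n) (Fin n) ℂ) :
    (matFun f A).IsHermitian := by
  rw [matFun]
  split_ifs with hA
  · exact Matrix.isHermitian_mul_mul_conjTranspose _
      (Matrix.isHermitian_diagonal_iff.2 fun i => Complex.conj_ofReal _)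
  · exact Matrix.isHermitian_zero

-- unitary facts
lemma eigUnit_mul_star {A : Matrix (Fin n) (Fin n) ℂ} (hA : A.IsHermitian) :
    (hA.eigenvectorUnitary : Matrix (Fin n) (Fin n) ℂ) *
      (hA.eigenvectorUnitary : Matrix (Fin n) (Fin n) ℂ)ᴴ = 1 :=
  (Matrix.mem_unitaryGroup_iff).mp hA.eigenvectorUnitary.2

lemma star_mul_eigUnit {A : Matrix (Fin n) (Fin n) ℂ} (hA : A.IsHermitian) :
    (hA.eigenvectorUnitary : Matrix (Fin n) (Fin n) ℂ)ᴴ *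
      (hA.eigenvectorUnitary : Matrix (Fin n) (Fin n) ℂ) = 1 :=
  (Matrix.mem_unitaryGroup_iff').mp hA.eigenvectorUnitary.2

-- dot product conjugation
lemma conj_dot {m : ℕ} (M : Matrix (Fin m) (Fin n) ℂ) (B : Matrix (Fin n) (Fin n) ℂ)
    (v : Fin m → ℂ) :
    star v ⬝ᵥ ((M * B * Mᴴ) *ᵥ v) = star (Mᴴ *ᵥ v) ⬝ᵥ (B *ᵥ (Mᴴ *ᵥ v)) := by
  rw [star_mulVec, Matrix.dotProduct_mulVec, Matrix.dotProduct_mulVec,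
    Matrix.vecMul_vecMul, Matrix.conjTranspose_conjTranspose,
    ← Matrix.dotProduct_mulVec, ← Matrix.mulVec_mulVec, ← Matrix.dotProduct_mulVec]

lemma diag_dot (g : Fin n → ℝ) (w : Fin n → ℂ) :
    (star w ⬝ᵥ ((Matrix.diagonal (fun i => (g i : ℂ))) *ᵥ w)).re
      = ∑ i, g i * Complex.normSq (w i) := by
  simp only [dotProduct, Matrix.mulVec_diagonal, Pi.star_apply]
  rw [Complex.re_sum]
  congr 1; ext i
  have : (starRingEnd ℂ) (w i) * ((g i : ℂ) * w i) = (g i : ℂ) * (Complex.normSq (w i) : ℂ) := by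
    rw [mul_comm ((starRingEnd ℂ) (w i)), mul_assoc, Complex.mul_conj]
  rw [show star (w i) = (starRingEnd ℂ) (w i) from rfl, this]
  simp

lemma quadform {S : Matrix (Fin n) (Fin n) ℂ} (hS : S.IsHermitian)
    (U : Matrix (Fin n) (Fin n) ℂ) (g : Fin n → ℝ) (v : Fin n → ℂ) :
    (star v ⬝ᵥ ((S * (U * Matrix.diagonal (fun i => (g i : ℂ)) * Uᴴ) * S) *ᵥ v)).re
      = ∑ i, g i * Complex.normSq ((Uᴴ *ᵥ (S *ᵥ v)) i) := by
  have h1 : S * (U * Matrix.diagonal (fun i => (g i : ℂ)) * Uᴴ) * S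
      = S * (U * Matrix.diagonal (fun i => (g i : ℂ)) * Uᴴ) * Sᴴ := by rw [hS.eq]
  rw [h1, conj_dot, hS.eq, conj_dot, diag_dot]

-- full row rank conjugation preserves PosDef
lemma posDef_conj_s8 {m : ℕ} {X : Matrix (Fin n) (Fin n) ℂ} (hX : X.PosDef)
    {M : Matrix (Fin m) (Fin n) ℂ} (hM : (M * Mᴴ).PosDef) :
    (M * X * Mᴴ).PosDef := by
  refine Matrix.PosDef.of_dotProduct_mulVec_pos (Matrix.isHermitian_mul_mul_conjTranspose _ hX.1) fun v hv => ?_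
  rw [conj_dot]
  have hMv : Mᴴ *ᵥ v ≠ 0 := by
    intro h
    have h2 := hM.dotProduct_mulVec_pos hv
    rw [show M * Mᴴ = M * (1 : Matrix (Fin n) (Fin n) ℂ) * Mᴴ by rw [Matrix.mul_one], conj_dot,
      one_mulVec, h] at h2
    simp only [dotProduct_zero] at h2
    exact lt_irrefl _ h2
  exact hX.dotProduct_mulVec_pos hMv

set_option maxHeartbeats 1000000 in
-- the N-trick : transformer inequality for X Z⁻¹ X
lemma key_psd {m : ℕ} {X Z : Matrix (Fin n) (Fin n) ℂ} (hX : X.PosDef) (hZ : Z.PosDef)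
    {M : Matrix (Fin m) (Fin n) ℂ} (hM : (M * Mᴴ).PosDef) :
    (M * (X * Z⁻¹ * X) * Mᴴ - (M * X * Mᴴ) * (M * Z * Mᴴ)⁻¹ * (M * X * Mᴴ)).PosSemidef := by
  set X' := M * X * Mᴴ with hX'
  set Z' := M * Z * Mᴴ with hZ'
  have hZ'pd : Z'.PosDef := posDef_conj_s8 hZ hM
  have hZdet : IsUnit Z.det := (isUnit_iff_isUnit_det _).1 hZ.isUnit
  have hZ'det : IsUnit Z'.det := (isUnit_iff_isUnit_det _).1 hZ'pd.isUnit
  have hZinv : Z * Z⁻¹ = 1 := Z.mul_nonsing_inv hZdet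
  have hZ'inv : Z' * Z'⁻¹ = 1 := Z'.mul_nonsing_inv hZ'det
  haveI := Z.invertibleOfIsUnitDet hZdet
  haveI := Z'.invertibleOfIsUnitDet hZ'det
  set N := X * Mᴴ - Z * Mᴴ * Z'⁻¹ * X' with hN
  have hNH : Nᴴ = M * X - X' * Z'⁻¹ * (M * Z) := by
    rw [hN]
    simp only [Matrix.conjTranspose_sub, Matrix.conjTranspose_mul,
      Matrix.conjTranspose_conjTranspose, Matrix.conjTranspose_nonsing_inv,
      hX.1.eq, hZ.1.eq, (posDef_conj_s8 hX hM).1.eq, hZ'pd.1.eq]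
    rw [hX', hZ']
    simp only [Matrix.conjTranspose_mul, Matrix.conjTranspose_conjTranspose, hX.1.eq, hZ.1.eq,
      Matrix.mul_assoc]
  have hW : ∀ (C : Matrix (Fin m) (Fin m) ℂ), M * (Z * (Mᴴ * (Z'⁻¹ * C))) = C := by
    intro C
    rw [← Matrix.mul_assoc, ← Matrix.mul_assoc, ← hZ', Matrix.mul_nonsing_inv_cancel_left _ _ hZ'det]
  have hfold2 : M * (X * Mᴴ) = X' := by rw [hX', Matrix.mul_assoc]
  have hfold : ∀ (C : Matrix (Fin m) (Fin m) ℂ), M * (X * (Mᴴ * C)) = X' * C := by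
    intro C; rw [hX']; simp only [Matrix.mul_assoc]
  have expand : Nᴴ * Z⁻¹ * N = M * (X * Z⁻¹ * X) * Mᴴ - X' * Z'⁻¹ * X' := by
    rw [hNH, hN]
    simp only [Matrix.sub_mul, Matrix.mul_sub, Matrix.mul_assoc,
      Matrix.inv_mul_cancel_left_of_invertible, Matrix.mul_inv_cancel_left_of_invertible, hW, hfold2, hfold]
    abel
  rw [← expand]
  exact (hZ.inv.posSemidef).conjTranspose_mul_mul_same N

lemma UdU_mul {U : Matrix (Fin n) (Fin n) ℂ} (hU : Uᴴ * U = 1) (d e : Fin n → ℂ) :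
    (U * Matrix.diagonal d * Uᴴ) * (U * Matrix.diagonal e * Uᴴ)
      = U * Matrix.diagonal (fun i => d i * e i) * Uᴴ := by
  have : (U * Matrix.diagonal d * Uᴴ) * (U * Matrix.diagonal e * Uᴴ)
      = U * (Matrix.diagonal d * (Uᴴ * U) * Matrix.diagonal e) * Uᴴ := by
    simp only [Matrix.mul_assoc]
  rw [this, hU, Matrix.mul_one, Matrix.diagonal_mul_diagonal]

lemma posDef_UdU {U : Matrix (Fin n) (Fin n) ℂ} (hU1 : Uᴴ * U = 1) (hU2 : U * Uᴴ = 1)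
    {g : Fin n → ℝ} (hg : ∀ i, 0 < g i) :
    (U * Matrix.diagonal (fun i => (g i : ℂ)) * Uᴴ).PosDef := by
  refine posDef_conj_s8 ?_ (by rw [hU2]; exact Matrix.PosDef.one)
  exact Matrix.posDef_diagonal_iff.2 fun i => by
    simpa using hg i

lemma mpow_half_mul_self {X : Matrix (Fin n) (Fin n) ℂ} (hX : X.PosDef) :
    mpow X (1/2) * mpow X (1/2) = X := by
  rw [mpow, matFun_of_isHermitian _ hX.1, UdU_mul (star_mul_eigUnit hX.1)]
  have : (fun i => ((hX.1.eigenvalues i ^ (1/2:ℝ) : ℝ) : ℂ) * ((hX.1.eigenvalues i ^ (1/2:ℝ) : ℝ) : ℂ))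
      = fun i => ((hX.1.eigenvalues i : ℝ) : ℂ) := by
    funext i
    rw [← Complex.ofReal_mul, ← Real.rpow_add (hX.eigenvalues_pos i)]
    norm_num
  rw [this]
  exact (hX.1.spectral_theorem).symm

lemma mpow_half_posDef {X : Matrix (Fin n) (Fin n) ℂ} (hX : X.PosDef) :
    (mpow X (1/2)).PosDef := by
  rw [mpow, matFun_of_isHermitian _ hX.1]
  exact posDef_UdU (star_mul_eigUnit hX.1) (eigUnit_mul_star hX.1)
    (fun i => Real.rpow_pos_of_pos (hX.eigenvalues_pos i) _)

set_option maxHeartbeats 1000000 in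
lemma rep {X Y : Matrix (Fin n) (Fin n) ℂ} (hX : X.PosDef) (hY : Y.PosDef) (u : Fin n → ℂ) :
    ∃ (c lam : Fin n → ℝ), (∀ i, 0 ≤ c i) ∧ (∀ i, 0 < lam i) ∧
      ((star u ⬝ᵥ (X *ᵥ u)).re = ∑ i, c i) ∧
      ((star u ⬝ᵥ (Dop X Y *ᵥ u)).re = ∑ i, c i * Real.log (lam i)) ∧
      (∀ s : ℝ, 0 ≤ s →
        (star u ⬝ᵥ ((X * (Y + (s : ℂ) • X)⁻¹ * X) *ᵥ u)).re
          = ∑ i, c i * ((lam i)⁻¹ + s)⁻¹) := by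
  set S := mpow X (1/2) with hSdef
  have hS : S.IsHermitian := matFun_isHermitian _ X
  have hSpd : S.PosDef := mpow_half_posDef hX
  have hSS : S * S = X := mpow_half_mul_self hX
  have hSdet : IsUnit S.det := (isUnit_iff_isUnit_det _).1 hSpd.isUnit
  have hYdet : IsUnit Y.det := (isUnit_iff_isUnit_det _).1 hY.isUnit
  haveI := S.invertibleOfIsUnitDet hSdet
  haveI := Y.invertibleOfIsUnitDet hYdet
  set A := S * Y⁻¹ * S with hAdef
  have hApd : A.PosDef := by
    have h1 : (S * Y⁻¹ * Sᴴ).PosDef :=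
      posDef_conj_s8 hY.inv (by rw [hS.eq, hSS]; exact hX)
    rwa [hS.eq] at h1
  have hA : A.IsHermitian := hApd.1
  set U := (hA.eigenvectorUnitary : Matrix (Fin n) (Fin n) ℂ) with hUdef
  set lam := hA.eigenvalues with hlamdef
  have hlam : ∀ i, 0 < lam i := hApd.eigenvalues_pos
  have hU1 : Uᴴ * U = 1 := star_mul_eigUnit hA
  have hU2 : U * Uᴴ = 1 := eigUnit_mul_star hA
  have hAspec : A = U * Matrix.diagonal (fun i => ((lam i : ℝ) : ℂ)) * Uᴴ := by
    exact hA.spectral_theorem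
  refine ⟨fun i => Complex.normSq ((Uᴴ *ᵥ (S *ᵥ u)) i), lam,
    fun i => Complex.normSq_nonneg _, hlam, ?_, ?_, ?_⟩
  · have hXeq : X = S * (U * Matrix.diagonal (fun i => (((1:ℝ)) : ℂ)) * Uᴴ) * S := by
      rw [show Matrix.diagonal (fun _ : Fin n => ((1:ℝ) : ℂ)) = (1 : Matrix (Fin n) (Fin n) ℂ) by
        simp, Matrix.mul_one, hU2, Matrix.mul_one, hSS]
    conv_lhs => rw [hXeq]
    rw [quadform hS U (fun _ => (1:ℝ)) u]
    simp
  · have hDop : Dop X Y = S * (U * Matrix.diagonal (fun i => ((Real.log (lam i) : ℝ) : ℂ)) * Uᴴ) * S := by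
      rw [Dop, ← hSdef, ← hAdef, mlog, matFun_of_isHermitian _ hA]
    rw [hDop, quadform hS U (fun i => Real.log (lam i)) u]
    exact Finset.sum_congr rfl fun i _ => mul_comm _ _
  · intro s hs
    have hAinv : A⁻¹ = U * Matrix.diagonal (fun i => (((lam i)⁻¹ : ℝ) : ℂ)) * Uᴴ := by
      apply Matrix.inv_eq_right_inv
      conv_lhs => rw [hAspec]
      rw [UdU_mul hU1]
      have : (fun i => ((lam i : ℝ) : ℂ) * (((lam i)⁻¹ : ℝ) : ℂ)) = fun _ : Fin n => (1 : ℂ) := by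
        funext i
        rw [← Complex.ofReal_mul, mul_inv_cancel₀ (hlam i).ne']
        simp
      rw [this, Matrix.diagonal_one, Matrix.mul_one, hU2]
    set C := U * Matrix.diagonal (fun i => (((lam i)⁻¹ + s : ℝ) : ℂ)) * Uᴴ with hCdef
    have hC : C = A⁻¹ + (s : ℂ) • 1 := by
      have hsplit : Matrix.diagonal (fun i => (((lam i)⁻¹ + s : ℝ) : ℂ))
          = Matrix.diagonal (fun i => (((lam i)⁻¹ : ℝ) : ℂ)) + (s : ℂ) • 1 := by
        ext i j
        by_cases h : i = j
        · subst h
          simp [Matrix.diagonal_apply_eq, Matrix.one_apply_eq]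
        · simp [Matrix.diagonal_apply_ne _ h, Matrix.one_apply_ne h]
      rw [hCdef, hsplit, Matrix.mul_add, Matrix.add_mul, hAinv]
      congr 1
      rw [Matrix.mul_smul, Matrix.smul_mul, Matrix.mul_one, hU2]
  -- B = Y + s X = S * C * S
    have hSAS : S * A⁻¹ * S = Y := by
      rw [hAdef, Matrix.mul_inv_rev, Matrix.mul_inv_rev, Matrix.nonsing_inv_nonsing_inv _ hYdet]
      simp only [Matrix.mul_assoc, Matrix.mul_inv_cancel_left_of_invertible,
        Matrix.inv_mul_of_invertible, Matrix.mul_one]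
    have hB : Y + (s : ℂ) • X = S * C * S := by
      rw [hC, Matrix.mul_add, Matrix.add_mul, hSAS, Matrix.mul_smul, Matrix.smul_mul,
        Matrix.mul_one, hSS]
    have hCinv : C⁻¹ = U * Matrix.diagonal (fun i => ((((lam i)⁻¹ + s)⁻¹ : ℝ) : ℂ)) * Uᴴ := by
      apply Matrix.inv_eq_right_inv
      rw [hCdef, UdU_mul hU1]
      have : (fun i => ((((lam i)⁻¹ + s : ℝ)) : ℂ) * ((((lam i)⁻¹ + s)⁻¹ : ℝ) : ℂ))
          = fun _ : Fin n => (1 : ℂ) := by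
        funext i
        rw [← Complex.ofReal_mul, mul_inv_cancel₀ (add_pos_of_pos_of_nonneg (inv_pos.2 (hlam i)) hs).ne']
        simp
      rw [this, Matrix.diagonal_one, Matrix.mul_one, hU2]
    have hKey : X * (Y + (s : ℂ) • X)⁻¹ * X = S * C⁻¹ * S := by
      rw [hB, Matrix.mul_inv_rev, Matrix.mul_inv_rev, ← hSS]
      simp only [Matrix.mul_assoc, Matrix.mul_inv_cancel_left_of_invertible,
        Matrix.inv_mul_cancel_left_of_invertible]
    rw [hKey, hCinv, quadform hS U (fun i => ((lam i)⁻¹ + s)⁻¹) u]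
    exact Finset.sum_congr rfl fun i _ => mul_comm _ _

open Filter intervalIntegral in
lemma scalar_integral {a : ℝ} (ha : 0 < a) {T : ℝ} (hT : 0 ≤ T) :
    ∫ s in (0:ℝ)..T, ((a + s)⁻¹ - (1 + s)⁻¹)
      = Real.log (a + T) - Real.log (1 + T) - Real.log a := by
  have key : ∀ b : ℝ, 0 < b → ∫ s in (0:ℝ)..T, (b + s)⁻¹ = Real.log (b + T) - Real.log b := by
    intro b hb
    have h1 : ∫ s in (0:ℝ)..T, (b + s)⁻¹ = ∫ s in (0:ℝ)..T, (fun x : ℝ => x⁻¹) (s + b) := by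
      congr 1; funext s; rw [add_comm]
    rw [h1, intervalIntegral.integral_comp_add_right (fun x : ℝ => x⁻¹) b, zero_add,
      integral_inv_of_pos hb (by linarith), Real.log_div (by linarith) hb.ne']
    ring_nf
  have hint : ∀ b : ℝ, 0 < b → IntervalIntegrable (fun s => (b + s)⁻¹) MeasureTheory.volume 0 T := by
    intro b hb
    apply ContinuousOn.intervalIntegrable
    apply (continuousOn_const.add continuousOn_id).inv₀
    intro x hx
    rw [Set.uIcc_of_le hT] at hx
    have : (0:ℝ) ≤ x := hx.1
    exact (by linarith : (0:ℝ) < b + x).ne'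
  rw [intervalIntegral.integral_sub (hint a ha) (hint 1 one_pos), key a ha, key 1 one_pos]
  simp; ring

open Filter in
lemma scalar_lim {a : ℝ} (ha : 0 < a) :
    Tendsto (fun T => Real.log (a + T) - Real.log (1 + T)) atTop (nhds 0) := by
  have h1 : Tendsto (fun T : ℝ => 1 + (a - 1) / (1 + T)) atTop (nhds 1) := by
    have h0 : Tendsto (fun T : ℝ => (a - 1) / (1 + T)) atTop (nhds 0) :=
      Tendsto.div_atTop tendsto_const_nhds (tendsto_atTop_add_const_left _ _ tendsto_id)
    simpa using tendsto_const_nhds.add h0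
  have h2 : Tendsto (fun T : ℝ => (a + T) / (1 + T)) atTop (nhds 1) := by
    apply h1.congr'
    filter_upwards [eventually_gt_atTop (0:ℝ)] with T hT
    field_simp
    ring
  have h3 := ((Real.continuousAt_log one_ne_zero).tendsto).comp h2
  simp only [Function.comp, Real.log_one] at h3
  apply h3.congr'
  filter_upwards [eventually_gt_atTop (0:ℝ)] with T hT
  simp only [Function.comp_apply]
  rw [Real.log_div (by linarith) (by linarith)]

open Filter in
lemma F_integrable (c lam : Fin n → ℝ) (hlam : ∀ i, 0 < lam i) {T : ℝ} (hT : 0 ≤ T) :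
    IntervalIntegrable (fun s => ∑ i, c i * (((lam i)⁻¹ + s)⁻¹ - (1 + s)⁻¹))
      MeasureTheory.volume 0 T := by
  apply ContinuousOn.intervalIntegrable
  apply continuousOn_finset_sum
  intro i _
  apply ContinuousOn.mul continuousOn_const
  have hpos : ∀ b : ℝ, 0 < b → ContinuousOn (fun s : ℝ => (b + s)⁻¹) (Set.uIcc 0 T) := by
    intro b hb
    apply (continuousOn_const.add continuousOn_id).inv₀
    intro x hx
    rw [Set.uIcc_of_le hT] at hx
    have : (0:ℝ) ≤ x := hx.1
    exact (by linarith : (0:ℝ) < b + x).ne'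
  exact (hpos _ (inv_pos.2 (hlam i))).sub (hpos 1 one_pos)

open Filter in
lemma F_tendsto (c lam : Fin n → ℝ) (hlam : ∀ i, 0 < lam i) :
    Tendsto (fun T => ∫ s in (0:ℝ)..T, ∑ i, c i * (((lam i)⁻¹ + s)⁻¹ - (1 + s)⁻¹))
      atTop (nhds (∑ i, c i * Real.log (lam i))) := by
  have hform : ∀ T : ℝ, 0 ≤ T →
      (∫ s in (0:ℝ)..T, ∑ i, c i * (((lam i)⁻¹ + s)⁻¹ - (1 + s)⁻¹))
        = ∑ i, c i * ((Real.log ((lam i)⁻¹ + T) - Real.log (1 + T)) - Real.log ((lam i)⁻¹)) := by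
    intro T hT
    have hint : ∀ i : Fin n, IntervalIntegrable
        (fun s => c i * (((lam i)⁻¹ + s)⁻¹ - (1 + s)⁻¹)) MeasureTheory.volume 0 T := by
      intro i
      apply ContinuousOn.intervalIntegrable
      apply ContinuousOn.mul continuousOn_const
      have hpos : ∀ b : ℝ, 0 < b → ContinuousOn (fun s : ℝ => (b + s)⁻¹) (Set.uIcc 0 T) := by
        intro b hb
        apply (continuousOn_const.add continuousOn_id).inv₀
        intro x hx
        rw [Set.uIcc_of_le hT] at hx
        have : (0:ℝ) ≤ x := hx.1
        exact (by linarith : (0:ℝ) < b + x).ne'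
      exact (hpos _ (inv_pos.2 (hlam i))).sub (hpos 1 one_pos)
    rw [intervalIntegral.integral_finset_sum (fun i _ => hint i)]
    refine Finset.sum_congr rfl fun i _ => ?_
    rw [intervalIntegral.integral_const_mul, scalar_integral (inv_pos.2 (hlam i)) hT]
  have hlim : Tendsto (fun T => ∑ i, c i *
      ((Real.log ((lam i)⁻¹ + T) - Real.log (1 + T)) - Real.log ((lam i)⁻¹)))
      atTop (nhds (∑ i, c i * Real.log (lam i))) := by
    apply tendsto_finset_sum
    intro i _
    have h := ((scalar_lim (inv_pos.2 (hlam i))).sub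
      (tendsto_const_nhds (x := Real.log ((lam i)⁻¹)))).const_mul (c i)
    simpa [Real.log_inv] using h
  apply hlim.congr'
  filter_upwards [eventually_ge_atTop (0:ℝ)] with T hT
  exact (hform T hT).symm

lemma expand_sum {ι : Type*} [Fintype ι] (d mu : ι → ℝ) (s : ℝ) :
    (∑ i, d i * (((mu i)⁻¹ + s)⁻¹ - (1 + s)⁻¹))
      = (∑ i, d i * ((mu i)⁻¹ + s)⁻¹) - (1 + s)⁻¹ * ∑ i, d i := by
  rw [Finset.mul_sum, ← Finset.sum_sub_distrib]
  exact Finset.sum_congr rfl fun i _ => by ring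

lemma Dop_isHermitian (X Y : Matrix (Fin n) (Fin n) ℂ) : (Dop X Y).IsHermitian := by
  have hS : (mpow X (1/2)).IsHermitian := matFun_isHermitian _ _
  have hL : (mlog (mpow X (1/2) * Y⁻¹ * mpow X (1/2))).IsHermitian := matFun_isHermitian _ _
  show (Dop X Y)ᴴ = Dop X Y
  rw [Dop]
  generalize hLg : mlog (mpow X (1/2) * Y⁻¹ * mpow X (1/2)) = L at hL
  simp only [Matrix.conjTranspose_mul, hS.eq, hL.eq, Matrix.mul_assoc]

lemma posDef_add_smul {X Y : Matrix (Fin n) (Fin n) ℂ} (hX : X.PosDef) (hY : Y.PosDef)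
    {s : ℝ} (hs : 0 ≤ s) : (Y + (s : ℂ) • X).PosDef := by
  rw [Matrix.posDef_iff_dotProduct_mulVec]
  constructor
  · show (Y + (s:ℂ) • X)ᴴ = _
    rw [Matrix.conjTranspose_add, Matrix.conjTranspose_smul, hX.1.eq, hY.1.eq,
      Complex.star_def, Complex.conj_ofReal]
  · intro x hx
    rw [Matrix.add_mulVec, dotProduct_add, Matrix.smul_mulVec,
      dotProduct_smul]
    apply add_pos_of_pos_of_nonneg (hY.dotProduct_mulVec_pos hx)
    exact smul_nonneg (by exact_mod_cast hs) (le_of_lt (hX.dotProduct_mulVec_pos hx))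


/-- transformer inequality for the operator relative entropy:
`M · D_op(X‖Y) · Mᴴ − D_op(M X Mᴴ ‖ M Y Mᴴ)` is positive semidefinite. -/
theorem Dop_conj_transformer_inequality {m n : ℕ}
    (X Y : Matrix (Fin n) (Fin n) ℂ) (hX : X.PosDef) (hY : Y.PosDef)
    (M : Matrix (Fin m) (Fin n) ℂ) (hM : (M * Mᴴ).PosDef) :
    (M * Dop X Y * Mᴴ - Dop (M * X * Mᴴ) (M * Y * Mᴴ)).PosSemidef := by
  have hX' : (M * X * Mᴴ).PosDef := posDef_conj_s8 hX hM
  have hY' : (M * Y * Mᴴ).PosDef := posDef_conj_s8 hY hM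
  have hH : (M * Dop X Y * Mᴴ - Dop (M * X * Mᴴ) (M * Y * Mᴴ)).IsHermitian :=
    (Matrix.isHermitian_mul_mul_conjTranspose M (Dop_isHermitian X Y)).sub
      (Dop_isHermitian _ _)
  refine Matrix.PosSemidef.of_dotProduct_mulVec_nonneg hH fun v => ?_
  set z := star v ⬝ᵥ ((M * Dop X Y * Mᴴ - Dop (M * X * Mᴴ) (M * Y * Mᴴ)) *ᵥ v) with hz
  have hstar : star z = z := by
    rw [hz, ← Matrix.star_dotProduct, Matrix.star_mulVec, hH.eq, ← Matrix.dotProduct_mulVec]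
  rw [Complex.le_def]
  constructor
  swap
  · have him := congrArg Complex.im hstar
    simp only [Complex.star_def, Complex.conj_im] at him
    simp only [Complex.zero_im]
    linarith
  -- real part
  simp only [Complex.zero_re]
  rw [hz, Matrix.sub_mulVec, dotProduct_sub, Complex.sub_re]
  rw [sub_nonneg]
  set u := Mᴴ *ᵥ v with hu
  have hfirst : (star v ⬝ᵥ ((M * Dop X Y * Mᴴ) *ᵥ v)).re = (star u ⬝ᵥ (Dop X Y *ᵥ u)).re := by
    rw [conj_dot]
  rw [hfirst]
  obtain ⟨c, lam, hc, hlam, hXu, hDu, hK⟩ := rep hX hY u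
  obtain ⟨c', lam', hc', hlam', hXv, hDv, hK'⟩ := rep hX' hY' v
  rw [hDu, hDv]
  have hsum : ∑ i, c' i = ∑ i, c i := by
    rw [← hXv, ← hXu, hu, conj_dot]
  refine le_of_tendsto_of_tendsto (F_tendsto c' lam' hlam') (F_tendsto c lam hlam) ?_
  filter_upwards [Filter.eventually_ge_atTop (0:ℝ)] with T hT
  apply intervalIntegral.integral_mono_on hT (F_integrable c' lam' hlam' hT)
    (F_integrable c lam hlam hT)
  intro s hs
  have hs0 : (0:ℝ) ≤ s := hs.1
  -- pointwise comparison
  have hZ : (Y + (s:ℂ) • X).PosDef := posDef_add_smul hX hY hs0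
  have hMZ : M * (Y + (s:ℂ) • X) * Mᴴ = (M * Y * Mᴴ) + (s:ℂ) • (M * X * Mᴴ) := by
    rw [Matrix.mul_add, Matrix.add_mul, Matrix.mul_smul, Matrix.smul_mul]
  have hpsd := key_psd hX hZ hM
  rw [hMZ] at hpsd
  have hineq := (hpsd.dotProduct_mulVec_nonneg v)
  rw [Matrix.sub_mulVec, dotProduct_sub] at hineq
  have hre : (star v ⬝ᵥ (((M * X * Mᴴ) * ((M * Y * Mᴴ) + (s:ℂ) • (M * X * Mᴴ))⁻¹
        * (M * X * Mᴴ)) *ᵥ v)).re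
      ≤ (star v ⬝ᵥ ((M * (X * (Y + (s:ℂ) • X)⁻¹ * X) * Mᴴ) *ᵥ v)).re := by
    have := (Complex.le_def.1 hineq).1
    rw [Complex.zero_re, Complex.sub_re] at this
    linarith
  rw [conj_dot] at hre
  rw [hK s hs0, hK' s hs0] at hre
  rw [expand_sum, expand_sum, hsum]
  exact sub_le_sub_right hre _
end
end
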